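/- Let R = ℂ[x,y,z]. If f₁, f₂, f₃ ∈ R admit a syzygy A·f₁ + B·f₂ + C·f₃ = 0 with A, B, C an R-regular sequence, then the ideal I = ⟨f₁, f₂, f₃⟩ is equal to the ideal generated by the 2×2 minors of a 3×2 matrix over R. -/

import Mathlib

open MvPolynomial

lemma aux_mem_of_reg {R : Type*} [CommRing R] {I : Ideal R} {c x : R}
    (h : IsSMulRegular (R ⧸ (I • ⊤ : Submodule R R)) c) (hx : c * x ∈ I) : x ∈ I := by
  have hIt : (I • ⊤ : Submodule R R) = I := by
    rw [Ideal.smul_eq_mul, Ideal.mul_top]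
  have h0 : c • (Submodule.Quotient.mk x : R ⧸ (I • ⊤ : Submodule R R)) = c • 0 := by
    rw [smul_zero, ← Submodule.Quotient.mk_smul, Submodule.Quotient.mk_eq_zero, hIt,
      smul_eq_mul]
    exact hx
  have := h h0
  rw [← hIt]
  exact (Submodule.Quotient.mk_eq_zero _).1 this

theorem stmt_1 (f₁ f₂ f₃ A B C : MvPolynomial (Fin 3) ℂ)
    (hreg : RingTheory.Sequence.IsRegular (MvPolynomial (Fin 3) ℂ) [A, B, C])
    (hsyz : A * f₁ + B * f₂ + C * f₃ = 0) :
    ∃ M : Matrix (Fin 3) (Fin 2) (MvPolynomial (Fin 3) ℂ),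
      Ideal.span {f₁, f₂, f₃} =
        Ideal.span (Set.range fun i : Fin 3 => (M.submatrix i.succAbove id).det) := by
  have h0 := hreg.toIsWeaklyRegular.regular_mod_prev 0 (by norm_num)
  have h1 := hreg.toIsWeaklyRegular.regular_mod_prev 1 (by norm_num)
  have h2 := hreg.toIsWeaklyRegular.regular_mod_prev 2 (by norm_num)
  simp only [List.take, List.getElem_cons_zero, List.getElem_cons_succ] at h0 h1 h2
  have e0 : Ideal.ofList ([] : List (MvPolynomial (Fin 3) ℂ)) = ⊥ := Ideal.ofList_nil
  have e1 : Ideal.ofList [A] = Ideal.span {A} := by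
    unfold Ideal.ofList; congr 1; ext r; simp
  have e2 : Ideal.ofList [A, B] = Ideal.span ({A, B} : Set (MvPolynomial (Fin 3) ℂ)) := by
    unfold Ideal.ofList; congr 1; ext r; simp
  change IsSMulRegular (MvPolynomial (Fin 3) ℂ ⧸ (Ideal.ofList ([] : List (MvPolynomial (Fin 3) ℂ)) • ⊤ :
    Submodule (MvPolynomial (Fin 3) ℂ) (MvPolynomial (Fin 3) ℂ))) A at h0
  change IsSMulRegular (MvPolynomial (Fin 3) ℂ ⧸ (Ideal.ofList [A] • ⊤ :
    Submodule (MvPolynomial (Fin 3) ℂ) (MvPolynomial (Fin 3) ℂ))) B at h1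
  change IsSMulRegular (MvPolynomial (Fin 3) ℂ ⧸ (Ideal.ofList [A, B] • ⊤ :
    Submodule (MvPolynomial (Fin 3) ℂ) (MvPolynomial (Fin 3) ℂ))) C at h2
  rw [e0] at h0; rw [e1] at h1; rw [e2] at h2
  -- A ≠ 0
  have hA : A ≠ 0 := by
    rintro rfl
    have hq : (Submodule.Quotient.mk 1 :
        MvPolynomial (Fin 3) ℂ ⧸ ((⊥ : Ideal (MvPolynomial (Fin 3) ℂ)) • ⊤ :
          Submodule (MvPolynomial (Fin 3) ℂ) (MvPolynomial (Fin 3) ℂ))) = Submodule.Quotient.mk 0 := by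
      apply h0
      simp
    have h1' : (1 : MvPolynomial (Fin 3) ℂ) ∈
        ((⊥ : Ideal (MvPolynomial (Fin 3) ℂ)) • ⊤ :
          Submodule (MvPolynomial (Fin 3) ℂ) (MvPolynomial (Fin 3) ℂ)) := by
      simpa [Submodule.Quotient.mk_eq_zero, sub_eq_zero] using
        (Submodule.Quotient.eq _).1 hq
    simp [Ideal.smul_eq_mul] at h1'
  -- f₃ ∈ (A, B)
  have hm3 : f₃ ∈ Ideal.span ({A, B} : Set (MvPolynomial (Fin 3) ℂ)) := by
    apply aux_mem_of_reg h2
    rw [Ideal.mem_span_pair]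
    exact ⟨-f₁, -f₂, by linear_combination -hsyz⟩
  obtain ⟨u, v, huv⟩ := Ideal.mem_span_pair.1 hm3
  -- f₂ + C*v ∈ (A)
  have hm2 : f₂ + C * v ∈ Ideal.span ({A} : Set (MvPolynomial (Fin 3) ℂ)) := by
    apply aux_mem_of_reg h1
    rw [Ideal.mem_span_singleton]
    exact ⟨-(f₁ + C * u), by linear_combination hsyz + C * huv⟩
  obtain ⟨w, hw⟩ := Ideal.mem_span_singleton.1 hm2
  -- f₁ = -(B*w + C*u)
  have hf1 : f₁ = -(B * w + C * u) := by
    have hz : A * (f₁ + B * w + C * u) = 0 := by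
      linear_combination hsyz + C * huv - B * hw
    rcases mul_eq_zero.1 hz with h | h
    · exact absurd h hA
    · linear_combination h
  set N : Matrix (Fin 3) (Fin 2) (MvPolynomial (Fin 3) ℂ) :=
    Matrix.of ![![A, -v], ![B, u], ![C, -w]] with hN
  refine ⟨N, ?_⟩
  have key : (fun i : Fin 3 => (N.submatrix i.succAbove id).det) = ![f₁, -f₂, f₃] := by
    funext i
    fin_cases i
    · simp [hN, Matrix.det_fin_two, Matrix.submatrix_apply, Fin.succAbove]
      linear_combination -hf1
    · simp [hN, Matrix.det_fin_two, Matrix.submatrix_apply, Fin.succAbove]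
      linear_combination hw
    · simp [hN, Matrix.det_fin_two, Matrix.submatrix_apply, Fin.succAbove]
      linear_combination huv
  rw [key]
  have hrange : Set.range (![f₁, -f₂, f₃] : Fin 3 → MvPolynomial (Fin 3) ℂ)
      = {f₁, -f₂, f₃} := by
    ext x
    constructor
    · rintro ⟨i, rfl⟩
      fin_cases i <;> simp
    · rintro (rfl | rfl | rfl)
      exacts [⟨0, rfl⟩, ⟨1, rfl⟩, ⟨2, rfl⟩]
  rw [hrange]
  simp only [Ideal.span_insert, Ideal.span_singleton_neg]
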